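/- Fix a DAG structure on [n] with topologically ordered vertices, i.e., a parent map assigning to each i ∈ [n] a set Par(i) ⊆ {1,...,i−1}. Let P and Q be Bayes nets with this same structure, with conditional probability tables (p_k) and (q_k) indexed by pairs k = (i,a) with i ∈ [n] and a ∈ {0,1}^{|Par(i)|}, where p_k ∈ [0,1] and q_k ∈ (0,1) for all k. Then 2·∑_k P(Π_k)·(p_k − q_k)² ≤ D(P‖Q) ≤ ∑_k P(Π_k)·(p_k − q_k)²/(q_k(1 − q_k)), where the sums range over all pairs k = (i,a). -/

import Mathlib

/-- The Bayes net distribution on `{0,1}^n` with (topologically sorted) parent sets `Par`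
and conditional probability table `p`, where `p i a` is the probability that coordinate `i`
equals `1` given that the parents of `i` take values `a`. -/
noncomputable def bnDist {n : ℕ} (Par : Fin n → Finset (Fin n))
    (p : (i : Fin n) → ({j // j ∈ Par i} → Bool) → ℝ) : (Fin n → Bool) → ℝ :=
  fun x => ∏ i, if x i then p i (fun j => x j.1) else 1 - p i (fun j => x j.1)

/-- The parental configuration event `Π_{i,a} = {x : x restricted to Par i equals a}`. -/
noncomputable def configSet {n : ℕ} (Par : Fin n → Finset (Fin n)) (i : Fin n)
    (a : {j // j ∈ Par i} → Bool) : Finset (Fin n → Bool) :=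
  Finset.univ.filter (fun x => ∀ j : {j // j ∈ Par i}, x j.1 = a j)

/-- KL divergence (natural log) between two distributions on a finite set;
terms with `P x = 0` contribute `0` (automatic since `0 * log 0 = 0`). -/
noncomputable def klDiv {α : Type*} [Fintype α] (P Q : α → ℝ) : ℝ :=
  ∑ x, P x * Real.log (P x / Q x)

section Aux

variable {n : ℕ} (Par : Fin n → Finset (Fin n))
  (p : (i : Fin n) → ({j // j ∈ Par i} → Bool) → ℝ)

/-- A single conditional factor. -/
noncomputable def bnFac (i : Fin n) (x : Fin n → Bool) : ℝ :=
  if x i then p i (fun j => x j.1) else 1 - p i (fun j => x j.1)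

lemma bnDist_eq_prod (x : Fin n → Bool) : bnDist Par p x = ∏ i, bnFac Par p i x := rfl

lemma bnFac_congr {i : Fin n} {x y : Fin n → Bool} (hi : x i = y i)
    (hpar : ∀ j ∈ Par i, x j = y j) : bnFac Par p i x = bnFac Par p i y := by
  have h : (fun j : {j // j ∈ Par i} => x j.1) = fun j => y j.1 :=
    funext fun j => hpar j.1 j.2
  simp [bnFac, hi, h]

/-- Flip a single coordinate. -/
def flipAt (M : Fin n) (x : Fin n → Bool) : Fin n → Bool := Function.update x M (!x M)

lemma flipAt_apply_self (M : Fin n) (x : Fin n → Bool) : flipAt M x M = !x M := by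
  simp [flipAt]

lemma flipAt_apply_ne (M : Fin n) (x : Fin n → Bool) {j : Fin n} (h : j ≠ M) :
    flipAt M x j = x j := by
  simp [flipAt, Function.update_of_ne h]

lemma flipAt_flipAt (M : Fin n) (x : Fin n → Bool) : flipAt M (flipAt M x) = x := by
  funext j
  by_cases h : j = M
  · subst h; simp [flipAt]
  · rw [flipAt_apply_ne _ _ h, flipAt_apply_ne _ _ h]

variable (hPar : ∀ i : Fin n, ∀ j ∈ Par i, j < i)
include hPar

lemma sum_bnDist_telescope :
    ∀ (t m : ℕ), m + t = n → ∀ S : Finset (Fin n → Bool),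
      (∀ x y : Fin n → Bool, (∀ j : Fin n, (j : ℕ) < m → x j = y j) → x ∈ S → y ∈ S) →
      (2 : ℝ) ^ t * ∑ x ∈ S, bnDist Par p x
        = ∑ x ∈ S, ∏ j ∈ Finset.univ.filter (fun j : Fin n => (j : ℕ) < m),
            bnFac Par p j x := by
  intro t
  induction t with
  | zero =>
    intro m hm S _
    have : Finset.univ.filter (fun j : Fin n => (j : ℕ) < m) = Finset.univ := by
      apply Finset.filter_true_of_mem; intro j _; have := j.2; omega
    simp [this, bnDist_eq_prod]
  | succ t ih =>
    intro m hm S hS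
    have hmn : m < n := by omega
    set M : Fin n := ⟨m, hmn⟩ with hM
    have hIH := ih (m + 1) (by omega) S
      (fun x y h hx => hS x y (fun j hj => h j (by omega)) hx)
    set g : (Fin n → Bool) → ℝ :=
      fun x => ∏ j ∈ Finset.univ.filter (fun j : Fin n => (j : ℕ) < m), bnFac Par p j x with hg
    have hfil : Finset.univ.filter (fun j : Fin n => (j : ℕ) < m + 1)
        = insert M (Finset.univ.filter (fun j : Fin n => (j : ℕ) < m)) := by
      ext j
      simp only [Finset.mem_filter, Finset.mem_univ, true_and, Finset.mem_insert, Fin.ext_iff, hM]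
      omega
    have hMnot : M ∉ Finset.univ.filter (fun j : Fin n => (j : ℕ) < m) := by
      simp [hM]
    -- flip invariance facts
    have hSσ : ∀ x ∈ S, flipAt M x ∈ S := by
      intro x hx
      refine hS x _ (fun j hj => ?_) hx
      exact (flipAt_apply_ne M x (by simp [Fin.ext_iff, hM]; omega)).symm
    have hginv : ∀ x, g (flipAt M x) = g x := by
      intro x
      refine Finset.prod_congr rfl fun j hj => ?_
      simp only [Finset.mem_filter, Finset.mem_univ, true_and] at hj
      refine bnFac_congr Par p (flipAt_apply_ne M x (by simp [Fin.ext_iff, hM]; omega))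
        (fun k hk => ?_)
      have hkj : (k : ℕ) < (j : ℕ) := hPar j k hk
      exact flipAt_apply_ne M x (by simp [Fin.ext_iff, hM]; omega)
    have hfacM : ∀ x, bnFac Par p M (flipAt M x) = 1 - bnFac Par p M x := by
      intro x
      have ha : (fun k : {k // k ∈ Par M} => flipAt M x k.1) = fun k => x k.1 := by
        funext k
        have : (k.1 : ℕ) < m := hPar M k.1 k.2
        exact flipAt_apply_ne M x (by simp [Fin.ext_iff, hM]; omega)
      simp only [bnFac, flipAt_apply_self, ha]
      cases hxm : x M <;> simp
    have hre : ∑ x ∈ S, bnFac Par p M x * g x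
        = ∑ x ∈ S, (1 - bnFac Par p M x) * g x := by
      refine Finset.sum_nbij' (flipAt M) (flipAt M) hSσ hSσ
        (fun x _ => flipAt_flipAt M x) (fun x _ => flipAt_flipAt M x) (fun x _ => ?_)
      rw [hfacM, hginv]
      ring
    have hkey : (2 : ℝ) * ∑ x ∈ S, ∏ j ∈ Finset.univ.filter
          (fun j : Fin n => (j : ℕ) < m + 1), bnFac Par p j x
        = ∑ x ∈ S, g x := by
      have h1 : ∀ x, ∏ j ∈ Finset.univ.filter (fun j : Fin n => (j : ℕ) < m + 1),
          bnFac Par p j x = bnFac Par p M x * g x := by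
        intro x; rw [hfil, Finset.prod_insert hMnot]
      calc (2:ℝ) * ∑ x ∈ S, ∏ j ∈ Finset.univ.filter
              (fun j : Fin n => (j : ℕ) < m + 1), bnFac Par p j x
          = ∑ x ∈ S, bnFac Par p M x * g x + ∑ x ∈ S, (1 - bnFac Par p M x) * g x := by
            rw [← hre]; simp only [h1]; ring
        _ = ∑ x ∈ S, (bnFac Par p M x * g x + (1 - bnFac Par p M x) * g x) := by
            rw [← Finset.sum_add_distrib]
        _ = ∑ x ∈ S, g x := by refine Finset.sum_congr rfl fun x _ => ?_; ring
    calc (2 : ℝ) ^ (t + 1) * ∑ x ∈ S, bnDist Par p x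
        = 2 * ((2 : ℝ) ^ t * ∑ x ∈ S, bnDist Par p x) := by ring
      _ = 2 * ∑ x ∈ S, ∏ j ∈ Finset.univ.filter
            (fun j : Fin n => (j : ℕ) < m + 1), bnFac Par p j x := by rw [hIH]
      _ = ∑ x ∈ S, g x := hkey


lemma sum_config_split (i : Fin n) (a : {j // j ∈ Par i} → Bool) (b : Bool) :
    ∑ x ∈ (configSet Par i a).filter (fun x => x i = b), bnDist Par p x
      = (if b then p i a else 1 - p i a) * ∑ x ∈ configSet Par i a, bnDist Par p x := by
  classical
  set m : ℕ := (i : ℕ) + 1 with hm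
  set t : ℕ := n - m with ht
  have hmt : m + t = n := by have := i.2; omega
  set S : Bool → Finset (Fin n → Bool) :=
    fun b => (configSet Par i a).filter (fun x => x i = b) with hSdef
  have hmemS : ∀ (b : Bool) (x : Fin n → Bool),
      x ∈ S b ↔ (∀ j : {j // j ∈ Par i}, x j.1 = a j) ∧ x i = b := by
    intro b x
    simp [hSdef, configSet, Finset.mem_filter]
  have hclosed : ∀ b, ∀ x y : Fin n → Bool,
      (∀ j : Fin n, (j : ℕ) < m → x j = y j) → x ∈ S b → y ∈ S b := by
    intro b x y hxy hx
    rw [hmemS] at hx ⊢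
    constructor
    · intro j
      have hj : (j.1 : ℕ) < (i : ℕ) := hPar i j.1 j.2
      rw [← hxy j.1 (by omega)]; exact hx.1 j
    · rw [← hxy i (by omega)]; exact hx.2
  set g : (Fin n → Bool) → ℝ :=
    fun x => ∏ j ∈ Finset.univ.filter (fun j : Fin n => (j : ℕ) < (i : ℕ)), bnFac Par p j x
    with hg
  have hfil : Finset.univ.filter (fun j : Fin n => (j : ℕ) < m)
      = insert i (Finset.univ.filter (fun j : Fin n => (j : ℕ) < (i : ℕ))) := by
    ext j
    simp only [Finset.mem_filter, Finset.mem_univ, true_and, Finset.mem_insert, Fin.ext_iff]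
    omega
  have hinot : i ∉ Finset.univ.filter (fun j : Fin n => (j : ℕ) < (i : ℕ)) := by simp
  have hfac : ∀ (b : Bool), ∀ x ∈ S b,
      bnFac Par p i x = (if b then p i a else 1 - p i a) := by
    intro b x hx
    rw [hmemS] at hx
    have restr : (fun j : {j // j ∈ Par i} => x j.1) = a := funext fun j => hx.1 j
    simp only [bnFac, hx.2, restr]
  have htel : ∀ b : Bool, (2 : ℝ) ^ t * ∑ x ∈ S b, bnDist Par p x
      = (if b then p i a else 1 - p i a) * ∑ x ∈ S b, g x := by
    intro b
    rw [sum_bnDist_telescope Par p hPar t m hmt (S b) (hclosed b)]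
    rw [Finset.mul_sum]
    refine Finset.sum_congr rfl fun x hx => ?_
    rw [hfil, Finset.prod_insert hinot, hfac b x hx]
  have hginv : ∀ x, g (flipAt i x) = g x := by
    intro x
    refine Finset.prod_congr rfl fun j hj => ?_
    simp only [Finset.mem_filter, Finset.mem_univ, true_and] at hj
    refine bnFac_congr Par p (flipAt_apply_ne i x (by simp [Fin.ext_iff]; omega))
      (fun k hk => ?_) 
    have hkj : (k : ℕ) < (j : ℕ) := hPar j k hk
    exact flipAt_apply_ne i x (by simp [Fin.ext_iff]; omega)
  have hSσ : ∀ (b : Bool), ∀ x ∈ S b, flipAt i x ∈ S (!b) := by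
    intro b x hx
    rw [hmemS] at hx ⊢
    constructor
    · intro j
      have hj : (j.1 : ℕ) < (i : ℕ) := hPar i j.1 j.2
      rw [flipAt_apply_ne i x (by simp [Fin.ext_iff]; omega)]
      exact hx.1 j
    · rw [flipAt_apply_self, hx.2]
  have hT : ∑ x ∈ S true, g x = ∑ x ∈ S false, g x := by
    refine Finset.sum_nbij' (flipAt i) (flipAt i) (fun x hx => hSσ true x hx)
      (fun x hx => hSσ false x hx) (fun x _ => flipAt_flipAt i x)
      (fun x _ => flipAt_flipAt i x) (fun x _ => (hginv x).symm)
  have hsplit : ∑ x ∈ configSet Par i a, bnDist Par p x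
      = ∑ x ∈ S true, bnDist Par p x + ∑ x ∈ S false, bnDist Par p x := by
    rw [hSdef]
    have := Finset.sum_filter_add_sum_filter_not (configSet Par i a)
      (fun x => x i = true) (bnDist Par p)
    rw [← this]
    congr 1
    refine Finset.sum_congr (Finset.filter_congr fun x _ => ?_) fun _ _ => rfl
    simp
  have hPi : (2 : ℝ) ^ t * ∑ x ∈ configSet Par i a, bnDist Par p x
      = ∑ x ∈ S true, g x := by
    rw [hsplit, mul_add, htel true, htel false, hT]
    simp
    ring
  have h2t : (0 : ℝ) < 2 ^ t := by positivity
  have hb := htel b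
  have hTb : ∑ x ∈ S b, g x = ∑ x ∈ S true, g x := by
    cases b
    · exact hT.symm
    · rfl
  rw [hTb, ← hPi] at hb
  have hgoal : (2 : ℝ) ^ t * (∑ x ∈ S b, bnDist Par p x)
      = (2 : ℝ) ^ t * ((if b then p i a else 1 - p i a)
          * ∑ x ∈ configSet Par i a, bnDist Par p x) := by
    rw [hb]; ring
  exact mul_left_cancel₀ (ne_of_gt h2t) hgoal


omit hPar in
lemma bnFac_eq_on_config (r : (i : Fin n) → ({j // j ∈ Par i} → Bool) → ℝ)
    {i : Fin n} {a : {j // j ∈ Par i} → Bool} {b : Bool} {x : Fin n → Bool}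
    (hx : x ∈ configSet Par i a) (hb : x i = b) :
    bnFac Par r i x = if b then r i a else 1 - r i a := by
  simp only [configSet, Finset.mem_filter, Finset.mem_univ, true_and] at hx
  have restr : (fun j : {j // j ∈ Par i} => x j.1) = a := funext fun j => hx j
  simp only [bnFac, hb, restr]

lemma klDiv_decomp (q : (i : Fin n) → ({j // j ∈ Par i} → Bool) → ℝ)
    (hq : ∀ i a, q i a ∈ Set.Ioo (0:ℝ) 1) :
    klDiv (bnDist Par p) (bnDist Par q)
      = ∑ i : Fin n, ∑ a : ({j // j ∈ Par i} → Bool),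
          (∑ x ∈ configSet Par i a, bnDist Par p x) *
            (p i a * Real.log (p i a / q i a)
              + (1 - p i a) * Real.log ((1 - p i a) / (1 - q i a))) := by
  classical
  have hqpos : ∀ (i : Fin n) (x : Fin n → Bool), 0 < bnFac Par q i x := by
    intro i x
    unfold bnFac
    split
    · exact (hq i _).1
    · have h2 := (hq i (fun j => x j.1)).2; linarith
  have step1 : klDiv (bnDist Par p) (bnDist Par q)
      = ∑ x, ∑ i, bnDist Par p x * Real.log (bnFac Par p i x / bnFac Par q i x) := by
    unfold klDiv
    refine Finset.sum_congr rfl fun x _ => ?_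
    by_cases hPx : bnDist Par p x = 0
    · simp [hPx]
    · have hf : ∀ i : Fin n, bnFac Par p i x ≠ 0 := by
        intro i hi
        exact hPx (by rw [bnDist_eq_prod]; exact Finset.prod_eq_zero (Finset.mem_univ i) hi)
      have hdiv : bnDist Par p x / bnDist Par q x = ∏ i, bnFac Par p i x / bnFac Par q i x := by
        rw [bnDist_eq_prod, bnDist_eq_prod, Finset.prod_div_distrib]
      rw [hdiv, Real.log_prod (fun i _ => div_ne_zero (hf i) (ne_of_gt (hqpos i x))),
        Finset.mul_sum]
  rw [step1, Finset.sum_comm]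
  refine Finset.sum_congr rfl fun i _ => ?_
  have hconfig : ∀ a : {j // j ∈ Par i} → Bool, configSet Par i a
      = Finset.univ.filter (fun x : Fin n → Bool =>
          (fun j : {j // j ∈ Par i} => x j.1) = a) := by
    intro a; ext x; simp [configSet, funext_iff]
  rw [← Finset.sum_fiberwise Finset.univ
    (fun x : Fin n → Bool => (fun j : {j // j ∈ Par i} => x j.1))
    (fun x => bnDist Par p x * Real.log (bnFac Par p i x / bnFac Par q i x))]
  refine Finset.sum_congr rfl fun a _ => ?_
  rw [← hconfig a]
  -- now compute the inner sum over the configuration set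
  have hfilneg : (configSet Par i a).filter (fun x => ¬ (x i = true))
      = (configSet Par i a).filter (fun x => x i = false) := by
    apply Finset.filter_congr; intro x _; simp
  have hsum := Finset.sum_filter_add_sum_filter_not (configSet Par i a)
    (fun x => x i = true)
    (fun x => bnDist Par p x * Real.log (bnFac Par p i x / bnFac Par q i x))
  rw [← hsum, hfilneg]
  have htrue : ∑ x ∈ (configSet Par i a).filter (fun x => x i = true),
      bnDist Par p x * Real.log (bnFac Par p i x / bnFac Par q i x)
      = (p i a * ∑ x ∈ configSet Par i a, bnDist Par p x) * Real.log (p i a / q i a) := by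
    have h1 : ∀ x ∈ (configSet Par i a).filter (fun x => x i = true),
        bnDist Par p x * Real.log (bnFac Par p i x / bnFac Par q i x)
          = bnDist Par p x * Real.log (p i a / q i a) := by
      intro x hx
      rw [Finset.mem_filter] at hx
      rw [bnFac_eq_on_config Par p hx.1 hx.2, bnFac_eq_on_config Par q hx.1 hx.2]
      simp
    rw [Finset.sum_congr rfl h1, ← Finset.sum_mul]
    have := sum_config_split Par p hPar i a true
    simp only [if_true] at this
    rw [this]
  have hfalse : ∑ x ∈ (configSet Par i a).filter (fun x => x i = false),
      bnDist Par p x * Real.log (bnFac Par p i x / bnFac Par q i x)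
      = ((1 - p i a) * ∑ x ∈ configSet Par i a, bnDist Par p x)
          * Real.log ((1 - p i a) / (1 - q i a)) := by
    have h1 : ∀ x ∈ (configSet Par i a).filter (fun x => x i = false),
        bnDist Par p x * Real.log (bnFac Par p i x / bnFac Par q i x)
          = bnDist Par p x * Real.log ((1 - p i a) / (1 - q i a)) := by
      intro x hx
      rw [Finset.mem_filter] at hx
      rw [bnFac_eq_on_config Par p hx.1 hx.2, bnFac_eq_on_config Par q hx.1 hx.2]
      simp
    rw [Finset.sum_congr rfl h1, ← Finset.sum_mul]
    have := sum_config_split Par p hPar i a false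
    simp only [Bool.false_eq_true, if_false] at this
    rw [this]
  rw [htrue, hfalse]
  ring

end Aux

section Scalar

lemma dBin_upper {p q : ℝ} (hp : p ∈ Set.Icc (0:ℝ) 1) (hq : q ∈ Set.Ioo (0:ℝ) 1) :
    p * Real.log (p / q) + (1 - p) * Real.log ((1 - p) / (1 - q))
      ≤ (p - q) ^ 2 / (q * (1 - q)) := by
  obtain ⟨hp0, hp1⟩ := hp
  obtain ⟨hq0, hq1⟩ := hq
  have hq1' : (0:ℝ) < 1 - q := by linarith
  have h1 : p * Real.log (p / q) ≤ p * (p / q - 1) := by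
    rcases eq_or_lt_of_le hp0 with h | h
    · simp [← h]
    · exact mul_le_mul_of_nonneg_left (Real.log_le_sub_one_of_pos (div_pos h hq0)) hp0
  have h2 : (1 - p) * Real.log ((1 - p) / (1 - q)) ≤ (1 - p) * ((1 - p) / (1 - q) - 1) := by
    rcases eq_or_lt_of_le hp1 with h | h
    · simp [h]
    · have h1p : (0:ℝ) < 1 - p := by linarith
      exact mul_le_mul_of_nonneg_left (Real.log_le_sub_one_of_pos (div_pos h1p hq1')) h1p.le
  have heq : p * (p / q - 1) + (1 - p) * ((1 - p) / (1 - q) - 1)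
      = (p - q) ^ 2 / (q * (1 - q)) := by
    field_simp
    ring
  linarith

lemma dBin_lower {q : ℝ} (hq0 : 0 < q) (hq1 : q < 1) :
    ∀ p ∈ Set.Icc (0:ℝ) 1,
      2 * (p - q) ^ 2 ≤ p * Real.log (p / q) + (1 - p) * Real.log ((1 - p) / (1 - q)) := by
  have hq1' : (0:ℝ) < 1 - q := by linarith
  set F : ℝ → ℝ := fun x => x * Real.log x - x * Real.log q
      + ((1 - x) * Real.log (1 - x) - (1 - x) * Real.log (1 - q)) - 2 * (x - q) ^ 2 with hF
  set G : ℝ → ℝ := fun x => Real.log x - Real.log (1 - x) - 4 * x with hG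
  have cA : Continuous fun x : ℝ => x * Real.log x := Real.continuous_mul_log
  have cB : Continuous fun x : ℝ => x * Real.log q := continuous_id.mul continuous_const
  have cC : Continuous fun x : ℝ => (1 - x) * Real.log (1 - x) :=
    Real.continuous_mul_log.comp (continuous_const.sub continuous_id)
  have cD : Continuous fun x : ℝ => (1 - x) * Real.log (1 - q) :=
    (continuous_const.sub continuous_id).mul continuous_const
  have cE : Continuous fun x : ℝ => 2 * (x - q) ^ 2 :=
    continuous_const.mul ((continuous_id.sub continuous_const).pow 2)
  have Fcont : Continuous F := by
    rw [hF]; exact ((cA.sub cB).add (cC.sub cD)).sub cE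
  have Fq : F q = 0 := by simp [hF]
  have hFderiv : ∀ x ∈ Set.Ioo (0:ℝ) 1, HasDerivAt F (G x - G q) x := by
    intro x hx
    obtain ⟨hx0, hx1⟩ := hx
    have hx1' : (0:ℝ) < 1 - x := by linarith
    have h1 : HasDerivAt (fun y : ℝ => y * Real.log y) (Real.log x + 1) x :=
      Real.hasDerivAt_mul_log hx0.ne'
    have h2 : HasDerivAt (fun y : ℝ => y * Real.log q) (Real.log q) x := by
      simpa using (hasDerivAt_id x).mul_const (Real.log q)
    have hinner : HasDerivAt (fun y : ℝ => 1 - y) (-1) x := by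
      have := (hasDerivAt_const x (1:ℝ)).sub (hasDerivAt_id' x)
      rwa [zero_sub] at this
    have h3 : HasDerivAt (fun y : ℝ => (1 - y) * Real.log (1 - y))
        (-(Real.log (1 - x) + 1)) x := by
      have := (Real.hasDerivAt_mul_log hx1'.ne').comp x hinner
      refine this.congr_deriv ?_
      ring
    have h4 : HasDerivAt (fun y : ℝ => (1 - y) * Real.log (1 - q)) (-Real.log (1 - q)) x := by
      have := hinner.mul_const (Real.log (1 - q))
      refine this.congr_deriv ?_
      ring
    have h5 : HasDerivAt (fun y : ℝ => 2 * (y - q) ^ 2) (4 * (x - q)) x := by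
      have hb : HasDerivAt (fun y : ℝ => y - q) 1 x := (hasDerivAt_id x).sub_const q
      have := (hb.pow 2).const_mul (2:ℝ)
      refine this.congr_deriv ?_
      ring
    have hsum := (((h1.sub h2).add (h3.sub h4)).sub h5)
    rw [hF]
    refine hsum.congr_deriv ?_
    simp only [hG]
    ring
  have hGderiv : ∀ x ∈ Set.Ioo (0:ℝ) 1, HasDerivAt G (1/x + 1/(1-x) - 4) x := by
    intro x hx
    obtain ⟨hx0, hx1⟩ := hx
    have hx1' : (0:ℝ) < 1 - x := by linarith
    have g1 : HasDerivAt Real.log x⁻¹ x := Real.hasDerivAt_log hx0.ne'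
    have hinner : HasDerivAt (fun y : ℝ => 1 - y) (-1) x := by
      have := (hasDerivAt_const x (1:ℝ)).sub (hasDerivAt_id' x)
      rwa [zero_sub] at this
    have g2 : HasDerivAt (fun y : ℝ => Real.log (1 - y)) ((1 - x)⁻¹ * (-1)) x :=
      (Real.hasDerivAt_log hx1'.ne').comp x hinner
    have g3 : HasDerivAt (fun y : ℝ => 4 * y) 4 x := by
      simpa using (hasDerivAt_id x).const_mul (4:ℝ)
    have := (g1.sub g2).sub g3
    rw [hG]
    refine this.congr_deriv ?_
    field_simp
    ring
  have hGmono : MonotoneOn G (Set.Ioo (0:ℝ) 1) := by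
    apply monotoneOn_of_deriv_nonneg (convex_Ioo 0 1)
    · exact fun x hx => (hGderiv x hx).continuousAt.continuousWithinAt
    · intro x hx
      rw [isOpen_Ioo.interior_eq] at hx
      exact (hGderiv x hx).differentiableAt.differentiableWithinAt
    · intro x hx
      rw [isOpen_Ioo.interior_eq] at hx
      rw [(hGderiv x hx).deriv]
      obtain ⟨hx0, hx1⟩ := hx
      have hx1' : (0:ℝ) < 1 - x := by linarith
      have hxx : (0:ℝ) < x * (1 - x) := mul_pos hx0 hx1'
      have h4 : 4 ≤ 1/x + 1/(1-x) := by
        rw [div_add_div _ _ hx0.ne' hx1'.ne', le_div_iff₀ hxx]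
        nlinarith [sq_nonneg (2*x - 1)]
      linarith
  have hFanti : AntitoneOn F (Set.Ioc 0 q) := by
    apply antitoneOn_of_deriv_nonpos (convex_Ioc 0 q) Fcont.continuousOn
    · intro x hx
      rw [interior_Ioc] at hx
      exact (hFderiv x ⟨hx.1, lt_trans hx.2 hq1⟩).differentiableAt.differentiableWithinAt
    · intro x hx
      rw [interior_Ioc] at hx
      have hx' : x ∈ Set.Ioo (0:ℝ) 1 := ⟨hx.1, lt_trans hx.2 hq1⟩
      rw [(hFderiv x hx').deriv]
      have := hGmono hx' ⟨hq0, hq1⟩ hx.2.le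
      linarith
  have hFmono : MonotoneOn F (Set.Ico q 1) := by
    apply monotoneOn_of_deriv_nonneg (convex_Ico q 1) Fcont.continuousOn
    · intro x hx
      rw [interior_Ico] at hx
      exact (hFderiv x ⟨lt_trans hq0 hx.1, hx.2⟩).differentiableAt.differentiableWithinAt
    · intro x hx
      rw [interior_Ico] at hx
      have hx' : x ∈ Set.Ioo (0:ℝ) 1 := ⟨lt_trans hq0 hx.1, hx.2⟩
      rw [(hFderiv x hx').deriv]
      have := hGmono ⟨hq0, hq1⟩ hx' hx.1.le
      linarith
  have hIoo : ∀ x ∈ Set.Ioo (0:ℝ) 1, 0 ≤ F x := by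
    intro x hx
    rcases le_total x q with h | h
    · have := hFanti ⟨hx.1, h⟩ ⟨hq0, le_refl q⟩ h
      rw [Fq] at this
      linarith
    · have := hFmono ⟨le_refl q, hq1⟩ ⟨h, hx.2⟩ h
      rw [Fq] at this
      linarith
  have hIcc : ∀ x ∈ Set.Icc (0:ℝ) 1, 0 ≤ F x := by
    have hC : IsClosed {y : ℝ | 0 ≤ F y} := isClosed_le continuous_const Fcont
    have hsub : closure (Set.Ioo (0:ℝ) 1) ⊆ {y : ℝ | 0 ≤ F y} :=
      hC.closure_subset_iff.2 hIoo
    intro x hx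
    apply hsub
    rw [closure_Ioo (by norm_num : (0:ℝ) ≠ 1)]
    exact hx
  intro p hpp
  have hF0 := hIcc p hpp
  obtain ⟨hp0, hp1⟩ := hpp
  have e1 : p * Real.log (p / q) = p * Real.log p - p * Real.log q := by
    rcases eq_or_lt_of_le hp0 with h | h
    · simp [← h]
    · rw [Real.log_div h.ne' hq0.ne']; ring
  have e2 : (1 - p) * Real.log ((1 - p) / (1 - q))
      = (1 - p) * Real.log (1 - p) - (1 - p) * Real.log (1 - q) := by
    rcases eq_or_lt_of_le hp1 with h | h
    · simp [h]
    · have h1p : (0:ℝ) < 1 - p := by linarith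
      rw [Real.log_div h1p.ne' hq1'.ne']; ring
  rw [e1, e2]
  simp only [hF] at hF0
  linarith

end Scalar

lemma bnDist_nonneg' {n : ℕ} (Par : Fin n → Finset (Fin n))
    (p : (i : Fin n) → ({j // j ∈ Par i} → Bool) → ℝ)
    (hp : ∀ i a, p i a ∈ Set.Icc (0:ℝ) 1) (x : Fin n → Bool) : 0 ≤ bnDist Par p x := by
  rw [bnDist_eq_prod]
  refine Finset.prod_nonneg fun i _ => ?_
  unfold bnFac
  split
  · exact (hp i _).1
  · have := (hp i (fun j => x j.1)).2; linarith


theorem stmt3 (n : ℕ) (Par : Fin n → Finset (Fin n))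
    (hPar : ∀ i : Fin n, ∀ j ∈ Par i, j < i)
    (p q : (i : Fin n) → ({j // j ∈ Par i} → Bool) → ℝ)
    (hp : ∀ i a, p i a ∈ Set.Icc (0:ℝ) 1) (hq : ∀ i a, q i a ∈ Set.Ioo (0:ℝ) 1) :
    2 * (∑ i : Fin n, ∑ a : ({j // j ∈ Par i} → Bool),
        (∑ x ∈ configSet Par i a, bnDist Par p x) * (p i a - q i a) ^ 2)
      ≤ klDiv (bnDist Par p) (bnDist Par q) ∧
    klDiv (bnDist Par p) (bnDist Par q)
      ≤ ∑ i : Fin n, ∑ a : ({j // j ∈ Par i} → Bool),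
          (∑ x ∈ configSet Par i a, bnDist Par p x)
            * ((p i a - q i a) ^ 2 / (q i a * (1 - q i a))) := by
  have decomp := klDiv_decomp Par p hPar q hq
  constructor
  · rw [decomp, Finset.mul_sum]
    refine Finset.sum_le_sum fun i _ => ?_
    rw [Finset.mul_sum]
    refine Finset.sum_le_sum fun a _ => ?_
    have hP0 : 0 ≤ ∑ x ∈ configSet Par i a, bnDist Par p x :=
      Finset.sum_nonneg fun x _ => bnDist_nonneg' Par p hp x
    have hlb := dBin_lower (hq i a).1 (hq i a).2 (p i a) (hp i a)
    calc 2 * ((∑ x ∈ configSet Par i a, bnDist Par p x) * (p i a - q i a) ^ 2)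
        = (∑ x ∈ configSet Par i a, bnDist Par p x) * (2 * (p i a - q i a) ^ 2) := by ring
      _ ≤ _ := mul_le_mul_of_nonneg_left hlb hP0
  · rw [decomp]
    refine Finset.sum_le_sum fun i _ => ?_
    refine Finset.sum_le_sum fun a _ => ?_
    have hP0 : 0 ≤ ∑ x ∈ configSet Par i a, bnDist Par p x :=
      Finset.sum_nonneg fun x _ => bnDist_nonneg' Par p hp x
    exact mul_le_mul_of_nonneg_left (dBin_upper (hp i a) (hq i a)) hP0
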